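/- arXiv:quant-ph/0002081 — 6 statements merged into one kernel-verified Lean document; each statement's English description precedes it below -/
import Mathlib

section
/- Let f : G → G be a causal homeomorphism of the Galilean space-time G = ℝ × ℝ³. Then for all u, w ∈ G, P_T(u) = P_T(w) implies P_T(f(u)) = P_T(f(w)); that is, f maps each constant-time hyperplane into a constant-time hyperplane. -/
open Filter Topology Set

/-- Let `f` be a causal homeomorphism of the Galilean space-time
`G = ℝ × ℝ³` (i.e. `P_T(u) < P_T(w)` implies `P_T(f(u)) < P_T(f(w))`). Then
`P_T(u) = P_T(w)` implies `P_T(f(u)) = P_T(f(w))`: `f` maps each constant-time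
hyperplane into a constant-time hyperplane. -/
theorem stmt3
    (f : (ℝ × EuclideanSpace ℝ (Fin 3)) ≃ₜ (ℝ × EuclideanSpace ℝ (Fin 3)))
    (hf : ∀ u w : ℝ × EuclideanSpace ℝ (Fin 3), u.1 < w.1 → (f u).1 < (f w).1) :
    ∀ u w : ℝ × EuclideanSpace ℝ (Fin 3), u.1 = w.1 → (f u).1 = (f w).1 := by
  have key : ∀ u w : ℝ × EuclideanSpace ℝ (Fin 3), u.1 = w.1 → (f u).1 ≤ (f w).1 := by
    intro u w h
    have hc : ContinuousAt (fun t : ℝ => (f (t, w.2)).1) w.1 :=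
      (continuous_fst.comp (f.continuous.comp (continuous_id.prodMk
        continuous_const))).continuousAt
    have ht : Tendsto (fun t : ℝ => (f (t, w.2)).1) (𝓝[>] w.1) (𝓝 (f w).1) := by
      have := hc.tendsto.mono_left (nhdsWithin_le_nhds (s := Set.Ioi w.1))
      simpa using this
    refine ge_of_tendsto ht ?_
    filter_upwards [self_mem_nhdsWithin] with t ht'
    exact le_of_lt (hf u (t, w.2) (lt_of_eq_of_lt h ht'))
  intro u w h
  exact le_antisymm (key u w h) (key w u h.symm)
end

section
/- Every causal homeomorphism f of G = ℝ × ℝ³ is of the form f(t,x) = (f_T(t), f_X(t,x)), where f_T : ℝ → ℝ is a strictly (monotonically) increasing homeomorphism of ℝ and, for every t ∈ ℝ, the map f_X(t,·) : ℝ³ → ℝ³ is a homeomorphism of ℝ³. -/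
open Filter Topology Set

noncomputable section

/-- Euclidean 3-space. -/
abbrev E3 : Type := EuclideanSpace ℝ (Fin 3)

/-- The Galilean space-time `G = ℝ × ℝ³`. -/
abbrev Gal : Type := ℝ × E3

/-- A transformation (homeomorphism) of `G` is causal if it preserves the time
ordering of events: `P_T(u) < P_T(w)` implies `P_T(f(u)) < P_T(f(w))`. -/
def Causal (f : Gal ≃ₜ Gal) : Prop :=
  ∀ u w : Gal, u.1 < w.1 → (f u).1 < (f w).1

/-- Every causal homeomorphism `f` of `G = ℝ × ℝ³` is of the form
`f(t,x) = (f_T(t), f_X(t,x))`, where `f_T : ℝ → ℝ` is a strictly (monotonically)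
increasing homeomorphism of `ℝ` and, for every `t`, `f_X(t,·) : ℝ³ → ℝ³` is a
homeomorphism of `ℝ³`. -/
theorem stmt5 (f : Gal ≃ₜ Gal) (hf : Causal f) :
    ∃ (fT : ℝ ≃ₜ ℝ) (fX : ℝ → (E3 ≃ₜ E3)), StrictMono fT ∧
      ∀ (t : ℝ) (x : E3), f (t, x) = (fT t, fX t x) := by
  -- continuity of t ↦ (f (t, x)).1
  have hc : ∀ x : E3, Continuous fun s : ℝ => (f (s, x)).1 :=
    fun x => (continuous_fst.comp f.continuous).comp (Continuous.prodMk_left x)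
  -- first coordinate does not depend on x
  have hle : ∀ (t : ℝ) (x y : E3), (f (t, x)).1 ≤ (f (t, y)).1 := by
    intro t x y
    have ht : Tendsto (fun s : ℝ => (f (s, x)).1) (𝓝[<] t) (𝓝 ((f (t, x)).1)) :=
      ((hc x).tendsto t).mono_left nhdsWithin_le_nhds
    refine le_of_tendsto ht ?_
    filter_upwards [self_mem_nhdsWithin] with s hs
    exact le_of_lt (hf (s, x) (t, y) hs)
  have hkey : ∀ (t : ℝ) (x y : E3), (f (t, x)).1 = (f (t, y)).1 :=
    fun t x y => le_antisymm (hle t x y) (hle t y x)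
  set φ : ℝ → ℝ := fun t => (f (t, 0)).1 with hφ
  have hmono : StrictMono φ := fun a b hab => hf (a, 0) (b, 0) hab
  have hsurj : Function.Surjective φ := by
    intro s
    refine ⟨(f.symm (s, 0)).1, ?_⟩
    have := hkey (f.symm (s, 0)).1 0 (f.symm (s, 0)).2
    rw [hφ]
    simp only [this, Prod.mk.eta, f.apply_symm_apply]
  set fT : ℝ ≃ₜ ℝ := (StrictMono.orderIsoOfSurjective φ hmono hsurj).toHomeomorph with hfT
  have hfTval : ∀ t, fT t = φ t := fun t => rfl
  have hfst : ∀ p : Gal, (f p).1 = φ p.1 := fun p => hkey p.1 p.2 0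
  -- the spatial part
  refine ⟨fT, fun t => ?_, hmono, ?_⟩
  · refine Homeomorph.mk
      ⟨fun x => (f (t, x)).2, fun y => (f.symm (φ t, y)).2, ?_, ?_⟩ ?_ ?_
    · intro x
      have h1 : ((f (t, x)).1, (f (t, x)).2) = f (t, x) := rfl
      have h2 : (f (t, x)).1 = φ t := hfst (t, x)
      simp only [← h2, h1, f.symm_apply_apply]
    · intro y
      have h1 : φ (f.symm (φ t, y)).1 = φ t := by
        rw [← hfst (f.symm (φ t, y))]
        simp [f.apply_symm_apply]
      have h2 : (f.symm (φ t, y)).1 = t := hmono.injective h1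
      calc (f (t, (f.symm (φ t, y)).2)).2
          = (f ((f.symm (φ t, y)).1, (f.symm (φ t, y)).2)).2 := by rw [h2]
        _ = (f (f.symm (φ t, y))).2 := rfl
        _ = y := by simp [f.apply_symm_apply]
    · exact (continuous_snd.comp f.continuous).comp (Continuous.prodMk_right t)
    · exact (continuous_snd.comp f.symm.continuous).comp (Continuous.prodMk_right (φ t))
  · intro t x
    exact Prod.ext (hfst (t, x)) rfl
end
end

section
/- A homeomorphism f of G = ℝ × ℝ³ is causal if and only if it preserves semitrajectories, i.e. if and only if for every semitrajectory γ (the graph of a continuous curve [t₀, ∞) → ℝ³), the image set f(γ) is again a semitrajectory (the graph of a continuous curve [t₀′, ∞) → ℝ³ for some t₀′). -/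
open Filter Topology Set

noncomputable section

/-- The semitrajectory in `G` which is the graph of the curve `γ` on `[t₀, ∞)`. -/
def semitraj (t₀ : ℝ) (γ : ℝ → E3) : Set Gal :=
  (fun t => (t, γ t)) '' Set.Ici t₀

/-- `S ⊆ G` is a semitrajectory: the graph of a continuous curve `γ : [t₀, ∞) → ℝ³`. -/
def IsSemitraj (S : Set Gal) : Prop :=
  ∃ (t₀ : ℝ) (γ : ℝ → E3), ContinuousOn γ (Set.Ici t₀) ∧ S = semitraj t₀ γ

/-- Vertical slices: the continuous map `t ↦ (f (t, x)).1`. -/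
lemma aux_cont (f : Gal ≃ₜ Gal) (x : E3) :
    Continuous (fun t : ℝ => (f (t, x)).1) :=
  continuous_fst.comp (f.continuous.comp (continuous_id.prodMk continuous_const))

/-- For a causal `f`, the time of the image depends only on the time. -/
lemma fst_eq_of_causal {f : Gal ≃ₜ Gal} (hc : Causal f) :
    ∀ u w : Gal, u.1 = w.1 → (f u).1 = (f w).1 := by
  have key : ∀ u w : Gal, u.1 = w.1 → (f u).1 ≤ (f w).1 := by
    intro u w h
    have hT : Tendsto (fun t : ℝ => (f (t, u.2)).1) (𝓝[<] u.1) (𝓝 (f u).1) := by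
      have := (aux_cont f u.2).tendsto u.1
      simpa using this.mono_left nhdsWithin_le_nhds
    refine le_of_tendsto hT ?_
    filter_upwards [self_mem_nhdsWithin] with t ht
    exact (hc (t, u.2) w (by simpa [← h] using (ht : t < u.1))).le
  intro u w h
  exact le_antisymm (key u w h) (key w u h.symm)

/-- A homeomorphism `f` of `G = ℝ × ℝ³` is causal if and only if it
preserves semitrajectories: for every semitrajectory `γ`, the image `f(γ)` is again a
semitrajectory. -/
theorem stmt7 (f : Gal ≃ₜ Gal) :
    Causal f ↔ ∀ S : Set Gal, IsSemitraj S → IsSemitraj (f '' S) := by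
  constructor
  · -- causal implies preserves semitrajectories
    intro hc S hS
    obtain ⟨t₀, γ, hγ, rfl⟩ := hS
    -- the induced time map
    set τ : ℝ → ℝ := fun t => (f (t, (0 : E3))).1 with hτdef
    have hτmono : StrictMono τ := fun a b hab => hc (a, 0) (b, 0) hab
    have hτeq : ∀ u : Gal, (f u).1 = τ u.1 := fun u =>
      fst_eq_of_causal hc u (u.1, 0) rfl
    have hτsurj : Function.Surjective τ := by
      intro s
      refine ⟨(f.symm (s, 0)).1, ?_⟩
      have := hτeq (f.symm (s, 0))
      simp at this
      exact this.symm
    -- τ is an order isomorphism of ℝ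
    let e : ℝ ≃o ℝ := StrictMono.orderIsoOfSurjective τ hτmono hτsurj
    have he : ∀ t, e t = τ t := fun t => rfl
    have hecont : Continuous (e.symm : ℝ → ℝ) := OrderIso.continuous e.symm
    have hsymm_le : ∀ s, τ t₀ ≤ s → t₀ ≤ e.symm s := by
      intro s hs
      have h1 : e t₀ ≤ s := by rw [he]; exact hs
      exact e.le_symm_apply.mpr h1
    refine ⟨τ t₀, fun s => (f (e.symm s, γ (e.symm s))).2, ?_, ?_⟩
    · -- continuity of the new curve
      have hmap : Set.MapsTo (fun s => e.symm s) (Set.Ici (τ t₀)) (Set.Ici t₀) :=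
        fun s hs => hsymm_le s hs
      have h1 : ContinuousOn (fun s : ℝ => f (e.symm s, γ (e.symm s))) (Set.Ici (τ t₀)) :=
        f.continuous.comp_continuousOn
          (hecont.continuousOn.prodMk (hγ.comp hecont.continuousOn hmap))
      exact continuous_snd.comp_continuousOn h1
    · -- the image set is the graph
      rw [semitraj, semitraj, ← Set.image_comp]
      ext p
      simp only [Set.mem_image, Function.comp_apply, Set.mem_Ici]
      constructor
      · rintro ⟨t, ht, rfl⟩
        refine ⟨τ t, hτmono.monotone ht, ?_⟩
        have h1 : e.symm (τ t) = t := e.symm_apply_apply t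
        have h2 : (f (t, γ t)).1 = τ t := hτeq (t, γ t)
        rw [h1]
        exact Prod.ext h2.symm rfl
      · rintro ⟨s, hs, rfl⟩
        refine ⟨e.symm s, hsymm_le s hs, ?_⟩
        have h2 : (f (e.symm s, γ (e.symm s))).1 = τ (e.symm s) := hτeq _
        have h3 : τ (e.symm s) = s := e.apply_symm_apply s
        exact Prod.ext (by rw [h2, h3]) rfl
  · -- preserves semitrajectories implies causal
    intro hp
    -- Step 1: points with different times map to points with different times
    have hdiff : ∀ a b : Gal, a.1 < b.1 → (f a).1 ≠ (f b).1 := by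
      intro a b hab hfab
      -- affine curve through a and b
      set γ : ℝ → E3 := fun t => a.2 + ((t - a.1) / (b.1 - a.1)) • (b.2 - a.2) with hγdef
      have hγc : Continuous γ := by
        apply continuous_const.add
        exact (((continuous_id.sub continuous_const).div_const _).smul continuous_const)
      have hsub : b.1 - a.1 ≠ 0 := sub_ne_zero.mpr hab.ne'
      have hγa : γ a.1 = a.2 := by simp [hγdef]
      have hγb : γ b.1 = b.2 := by simp [hγdef, div_self hsub]
      obtain ⟨t₀', δ, hδ, heq⟩ := hp (semitraj a.1 γ) ⟨a.1, γ, hγc.continuousOn, rfl⟩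
      have ha : f a ∈ semitraj t₀' δ := by
        rw [← heq]
        refine ⟨a, ⟨a.1, self_mem_Ici, ?_⟩, rfl⟩
        show (a.1, γ a.1) = a
        rw [hγa]
      have hb : f b ∈ semitraj t₀' δ := by
        rw [← heq]
        refine ⟨b, ⟨b.1, hab.le, ?_⟩, rfl⟩
        show (b.1, γ b.1) = b
        rw [hγb]
      obtain ⟨s, _, hs⟩ := ha
      obtain ⟨r, _, hr⟩ := hb
      have hsr : s = r := by
        have h1 : (f a).1 = s := by rw [← hs]
        have h2 : (f b).1 = r := by rw [← hr]
        rw [← h1, ← h2, hfab]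
      have : f a = f b := by rw [← hs, ← hr, hsr]
      exact hab.ne (congrArg Prod.fst (f.injective this))
    -- Step 2: time coordinates of images are unbounded above along vertical lines
    have hunbdd : ∀ (x : E3) (t M : ℝ), ∃ s, t ≤ s ∧ M ≤ (f (s, x)).1 := by
      intro x t M
      obtain ⟨t₀', δ, hδ, heq⟩ := hp (semitraj t (fun _ => x))
        ⟨t, fun _ => x, continuousOn_const, rfl⟩
      have : (max M t₀', δ (max M t₀')) ∈ f '' semitraj t (fun _ => x) := by
        rw [heq]; exact ⟨max M t₀', Set.mem_Ici.mpr (le_max_right _ _), rfl⟩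
      obtain ⟨p, hp', hfp⟩ := this
      obtain ⟨s, hs, rfl⟩ := hp'
      exact ⟨s, hs, by rw [hfp]; exact le_max_left _ _⟩
    -- Step 3: points with the same time map to points with the same time
    have hsame : ∀ t (x y : E3), (f (t, x)).1 = (f (t, y)).1 := by
      have key : ∀ t (x y : E3), (f (t, x)).1 < (f (t, y)).1 → False := by
        intro t x y hlt
        -- g(s, x) ≠ g(t, y) for all s
        have hne : ∀ s, (f (s, x)).1 ≠ (f (t, y)).1 := by
          intro s
          rcases lt_trichotomy s t with h | h | h
          · exact hdiff (s, x) (t, y) h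
          · subst h; exact hlt.ne
          · exact (hdiff (t, y) (s, x) h).symm
        obtain ⟨s, hst, hM⟩ := hunbdd x t ((f (t, y)).1 + 1)
        have hsgt : (f (t, y)).1 < (f (s, x)).1 := by linarith
        -- IVT between t and s gives a contradiction
        have hts : t ≤ s := hst
        have := intermediate_value_Icc hts (aux_cont f x).continuousOn
          (Set.mem_Icc.mpr ⟨hlt.le, hsgt.le⟩)
        obtain ⟨c, _, hc⟩ := this
        exact hne c hc
      intro t x y
      by_contra h
      rcases lt_or_gt_of_ne h with h | h
      · exact key t x y h
      · exact key t y x h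
    -- Step 4: each vertical time map is strictly monotone increasing
    intro u w huw
    have hinj : Function.Injective (fun s : ℝ => (f (s, w.2)).1) := by
      intro a b hab
      by_contra h
      rcases lt_or_gt_of_ne h with h | h
      · exact hdiff (a, w.2) (b, w.2) h hab
      · exact hdiff (b, w.2) (a, w.2) h hab.symm
    rcases (aux_cont f w.2).strictMono_of_inj hinj with hm | ha
    · calc (f u).1 = (f (u.1, w.2)).1 := by
            rw [show u = (u.1, u.2) from rfl]; exact hsame u.1 u.2 w.2
        _ < (f (w.1, w.2)).1 := hm huw
        _ = (f w).1 := by rw [show w = (w.1, w.2) from rfl]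
    · exfalso
      obtain ⟨s, hs, hM⟩ := hunbdd w.2 u.1 ((f (u.1, w.2)).1 + 1)
      rcases eq_or_lt_of_le hs with rfl | hs'
      · linarith
      · have := ha hs'
        linarith
end
end

section
/- Let f be a causal homeomorphism of G = ℝ × ℝ³ that is asymptotically regular. Then its asymptotic transform f⁺ : ℝ³ → ℝ³ is a continuous function. -/
open Filter Topology Set

noncomputable section

/-- `S` is an asymptotically regular semitrajectory with asymptotic velocity `v`,
i.e. `S` is the graph of a continuous curve `γ : [t₀, ∞) → ℝ³` with `γ(t)/t → v`. -/
def HasAsympVel (S : Set Gal) (v : E3) : Prop :=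
  ∃ (t₀ : ℝ) (γ : ℝ → E3), ContinuousOn γ (Set.Ici t₀) ∧ S = semitraj t₀ γ ∧
    Tendsto (fun t : ℝ => t⁻¹ • γ t) atTop (𝓝 v)

/-- `F` is the asymptotic transform of `f`: for every `v`, every asymptotically regular
semitrajectory `S` with `ω(S) = v` has `ω(f(S)) = F v`.  (In particular the existence of
such an `F` says exactly that `f` is asymptotically regular at every point.) -/
def IsAsympTransform (f : Gal ≃ₜ Gal) (F : E3 → E3) : Prop :=
  ∀ (v : E3) (S : Set Gal), HasAsympVel S v → HasAsympVel (f '' S) (F v)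

/-- `f` is asymptotically regular: at every `v ∈ V` there is a `v′` such that every
asymptotically regular semitrajectory with asymptotic velocity `v` is mapped to one with
asymptotic velocity `v′`. -/
def AsympReg (f : Gal ≃ₜ Gal) : Prop :=
  ∃ F : E3 → E3, IsAsympTransform f F

/-- `f` is an asymptotic homeomorphism: both `f` and `f⁻¹` are asymptotically regular. -/
def AsympHomeo (f : Gal ≃ₜ Gal) : Prop := AsympReg f ∧ AsympReg f.symm

/-- `f` is an asymptotically identical transformation: a causal asymptotic
homeomorphism with `f⁺ = id`. -/
def AsympIdentical (f : Gal ≃ₜ Gal) : Prop :=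
  Causal f ∧ AsympHomeo f ∧ IsAsympTransform f (id : E3 → E3)

/-- `f` is an asymptotically Euclidean transformation: a causal asymptotic
homeomorphism with `f⁺(v) = R v − v₀` for some orthogonal `R` and `v₀ ∈ ℝ³`. -/
def AsympEuclidean (f : Gal ≃ₜ Gal) : Prop :=
  Causal f ∧ AsympHomeo f ∧
    ∃ (R : E3 ≃ₗᵢ[ℝ] E3) (v₀ : E3), IsAsympTransform f (fun v => R v - v₀)

lemma tendsto_fst_atTop' (f : Gal ≃ₜ Gal) (hf : Causal f) {t₀ c : ℝ} {γ δ : ℝ → E3}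
    (himg : f '' semitraj t₀ γ = semitraj c δ) :
    Tendsto (fun t => (f (t, γ t)).1) atTop atTop := by
  rw [tendsto_atTop_atTop]
  intro b
  have hMmem : ((max b c, δ (max b c)) : Gal) ∈ semitraj c δ :=
    ⟨max b c, Set.mem_Ici.mpr (le_max_right _ _), rfl⟩
  rw [← himg] at hMmem
  obtain ⟨p, hp, hfp⟩ := hMmem
  obtain ⟨t', ht', rfl⟩ := hp
  refine ⟨t' + 1, fun t ht => ?_⟩
  have h1 : (f (t', γ t')).1 < (f (t, γ t)).1 := hf _ _ (by dsimp; linarith)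
  rw [hfp] at h1
  exact le_trans (le_max_left b c) (le_of_lt h1)

lemma tendsto_ratio' (f : Gal ≃ₜ Gal) (hf : Causal f) {t₀ c : ℝ} {γ δ : ℝ → E3}
    (himg : f '' semitraj t₀ γ = semitraj c δ) {w : E3}
    (hδ : Tendsto (fun s => s⁻¹ • δ s) atTop (𝓝 w)) :
    Tendsto (fun t => ((f (t, γ t)).1)⁻¹ • (f (t, γ t)).2) atTop (𝓝 w) := by
  have hA := tendsto_fst_atTop' f hf himg
  have hcomp : Tendsto (fun t => ((f (t, γ t)).1)⁻¹ • δ ((f (t, γ t)).1)) atTop (𝓝 w) :=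
    hδ.comp hA
  refine Tendsto.congr' ?_ hcomp
  filter_upwards [eventually_ge_atTop t₀] with t ht
  have hmem : f (t, γ t) ∈ semitraj c δ := by
    rw [← himg]; exact ⟨(t, γ t), ⟨t, ht, rfl⟩, rfl⟩
  obtain ⟨s, hs, hsp⟩ := hmem
  rw [← hsp]

lemma line_asymp' (v : E3) : HasAsympVel (semitraj 1 (fun t => t • v)) v := by
  refine ⟨1, fun t => t • v, (continuous_id.smul continuous_const).continuousOn, rfl, ?_⟩
  have h : ∀ᶠ t : ℝ in atTop, v = t⁻¹ • t • v := by
    filter_upwards [eventually_ge_atTop (1:ℝ)] with t ht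
    rw [smul_smul, inv_mul_cancel₀ (by linarith), one_smul]
  exact Tendsto.congr' h tendsto_const_nhds


/-- Let `f` be a causal homeomorphism of `G = ℝ × ℝ³` that is
asymptotically regular, with asymptotic transform `F = f⁺`.  Then `f⁺` is continuous. -/
theorem stmt8 (f : Gal ≃ₜ Gal) (hf : Causal f) (F : E3 → E3)
    (hF : IsAsympTransform f F) : Continuous F := by
  classical
  rw [continuous_iff_seqContinuous]
  intro u v hu
  -- images of straight lines
  have hline : ∀ n : ℕ, HasAsympVel (f '' semitraj 1 (fun t => t • u n)) (F (u n)) :=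
    fun n => hF (u n) _ (line_asymp' (u n))
  choose c δ hδc himg hδlim using hline
  have hg : ∀ n, Tendsto (fun t => ((f (t, t • u n)).1)⁻¹ • (f (t, t • u n)).2)
      atTop (𝓝 (F (u n))) := fun n => tendsto_ratio' f hf (himg n) (hδlim n)
  have hTex : ∀ n : ℕ, ∃ T : ℝ, ∀ t ≥ T,
      dist (((f (t, t • u n)).1)⁻¹ • (f (t, t • u n)).2) (F (u n)) < 1/((n:ℝ)+1) := by
    intro n
    exact Metric.tendsto_atTop.mp (hg n) (1/((n:ℝ)+1)) (by positivity)
  choose T hT using hTex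
  -- the time sequence a
  set a : ℕ → ℝ := fun n => Nat.rec (max (T 0) 1) (fun n an => max (T (n+1)) (an + 1)) n
    with ha
  have haT : ∀ n, T n ≤ a n := by intro n; cases n <;> exact le_max_left _ _
  have hastep : ∀ n, a n + 1 ≤ a (n+1) := fun n => le_max_right _ _
  have hamono : StrictMono a := strictMono_nat_of_lt_succ fun n => by
    have := hastep n; linarith
  have ha1 : (1:ℝ) ≤ a 0 := le_max_right _ _
  have han : ∀ n : ℕ, (n : ℝ) ≤ a n := by
    intro n
    induction n with
    | zero => simpa using by linarith
    | succ n ih => push_cast; have := hastep n; linarith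
  have hatop : Tendsto a atTop atTop :=
    tendsto_atTop_mono han tendsto_natCast_atTop_atTop
  -- index function
  have hex : ∀ t : ℝ, ∃ n : ℕ, t < a (n+1) := by
    intro t
    obtain ⟨m, hm⟩ := (hatop.eventually (eventually_gt_atTop t)).exists
    exact ⟨m, hm.trans (hamono (Nat.lt_succ_self m))⟩
  set N : ℝ → ℕ := fun t => Nat.find (hex t) with hN
  have hNspec : ∀ t, t < a (N t + 1) := fun t => Nat.find_spec (hex t)
  have hNle : ∀ t, a 0 ≤ t → a (N t) ≤ t := by
    intro t ht
    cases hNt : N t with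
    | zero => exact ht
    | succ m =>
      have hmin := Nat.find_min (hex t) (show m < N t by omega)
      push_neg at hmin
      exact hmin
  have hNeq : ∀ (n : ℕ) (t : ℝ), a n ≤ t → t < a (n+1) → N t = n := by
    intro n t h1 h2
    have hle : N t ≤ n := Nat.find_min' (hex t) h2
    rcases lt_or_eq_of_le hle with h | h
    · exfalso
      have h3 : a (N t + 1) ≤ a n := hamono.monotone (show N t + 1 ≤ n by omega)
      have h4 := hNspec t
      linarith
    · exact h
  -- interpolation
  set L : ℕ → ℝ → E3 := fun n t =>
    u n + ((t - a n) / (a (n+1) - a n)) • (u (n+1) - u n) with hL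
  have hLcont : ∀ n, Continuous (L n) := fun n =>
    continuous_const.add
      (((continuous_id.sub continuous_const).div_const _).smul continuous_const)
  set w : ℝ → E3 := fun t => L (N t) t with hw
  have hwa : ∀ n, w (a n) = u n := by
    intro n
    have h0 : N (a n) = n := hNeq n (a n) le_rfl (hamono (Nat.lt_succ_self n))
    simp [hw, hL, h0]
  have hwL : ∀ n, ∀ t ∈ Icc (a n) (a (n+1)), w t = L n t := by
    intro n t ht
    rcases lt_or_eq_of_le ht.2 with h2 | h2
    · have h0 := hNeq n t ht.1 h2
      simp [hw, h0]
    · subst h2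
      rw [hwa (n+1), hL]
      dsimp only
      rw [div_self (sub_ne_zero.mpr (hamono (Nat.lt_succ_self n)).ne'), one_smul]
      abel
  -- continuity of w on [a 0, ∞)
  have hwcont : ContinuousOn w (Ici (a 0)) := by
    intro t ht
    have hIcc : t ∈ Icc (a (N t)) (a (N t + 1)) := ⟨hNle t ht, (hNspec t).le⟩
    rcases eq_or_lt_of_le hIcc.1 with heq | hlt
    · -- t = a (N t) : boundary
      have hright : ContinuousWithinAt w (Ici t) t := by
        have hmem : Icc (a (N t)) (a (N t + 1)) ∈ 𝓝[≥] t :=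
          Icc_mem_nhdsGE_of_mem ⟨heq.le, hNspec t⟩
        refine ContinuousWithinAt.congr_of_eventuallyEq
          (((hLcont (N t)).continuousAt).continuousWithinAt) ?_ (hwL _ _ hIcc)
        filter_upwards [hmem] with s hs
        exact hwL _ _ hs
      rcases eq_or_lt_of_le (Set.mem_Ici.mp ht) with h0 | h0
      · -- t = a 0
        have : Ici (a 0) = Ici t := by rw [h0]
        rw [this]
        exact hright
      · -- a 0 < t : two-sided
        have hN0 : N t ≠ 0 := by
          intro hc
          rw [hc] at heq
          exact absurd heq.symm (ne_of_gt h0)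
        obtain ⟨m, hm⟩ := Nat.exists_eq_succ_of_ne_zero hN0
        have hleft : ContinuousWithinAt w (Iic t) t := by
          have hsucc : a (m+1) = t := by
            have := heq; rw [hm] at this; exact this
          have htm : a m < t := by
            rw [← hsucc]; exact hamono (Nat.lt_succ_self m)
          have hmem : Icc (a m) t ∈ 𝓝[≤] t := Icc_mem_nhdsLE_of_mem ⟨htm, le_rfl⟩
          have hsub : Icc (a m) t ⊆ Icc (a m) (a (m+1)) := by
            rw [hsucc]
          have hwt : w t = L m t := hwL m t (hsub ⟨htm.le, le_rfl⟩)
          refine ContinuousWithinAt.congr_of_eventuallyEq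
            (((hLcont m).continuousAt).continuousWithinAt) ?_ hwt
          filter_upwards [hmem] with s hs
          exact hwL _ _ (hsub hs)
        exact (continuousAt_iff_continuous_left_right.mpr
          ⟨hleft, hright⟩).continuousWithinAt
    · -- interior point
      have hmem : Ioo (a (N t)) (a (N t + 1)) ∈ 𝓝 t := Ioo_mem_nhds hlt (hNspec t)
      have heq' : w =ᶠ[𝓝 t] L (N t) := by
        filter_upwards [hmem] with s hs
        exact hwL _ _ ⟨hs.1.le, hs.2.le⟩
      exact ((continuousAt_congr heq').mpr (hLcont (N t)).continuousAt).continuousWithinAt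
  -- asymptotic velocity of w
  have hwv : Tendsto w atTop (𝓝 v) := by
    rw [Metric.tendsto_atTop]
    intro ε hε
    obtain ⟨K, hK⟩ := Metric.tendsto_atTop.mp hu (ε/2) (by linarith)
    refine ⟨a K, fun t ht => ?_⟩
    have h0 : a 0 ≤ t := le_trans (hamono.monotone (Nat.zero_le K)) ht
    have htK : K ≤ N t := by
      by_contra h
      push_neg at h
      have h3 : a (N t + 1) ≤ a K := hamono.monotone h
      have h4 := hNspec t
      linarith
    have hIcc : t ∈ Icc (a (N t)) (a (N t + 1)) := ⟨hNle t h0, (hNspec t).le⟩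
    have hwt := hwL (N t) t hIcc
    set θ := (t - a (N t)) / (a (N t + 1) - a (N t)) with hθ
    have hden : (0:ℝ) < a (N t + 1) - a (N t) := by have := hastep (N t); linarith
    have hθ0 : 0 ≤ θ := div_nonneg (by linarith [hIcc.1]) hden.le
    have hθ1 : θ ≤ 1 := (div_le_one hden).mpr (by linarith [hIcc.2])
    rw [hwt, dist_eq_norm]
    have hrw : L (N t) t - v = (1-θ) • (u (N t) - v) + θ • (u (N t + 1) - v) := by
      rw [hL, hθ]
      dsimp only
      module
    rw [hrw]
    have h1 : ‖u (N t) - v‖ < ε/2 := by rw [← dist_eq_norm]; exact hK _ htK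
    have h2 : ‖u (N t + 1) - v‖ < ε/2 := by rw [← dist_eq_norm]; exact hK _ (by omega)
    have hb := norm_add_le ((1-θ) • (u (N t) - v)) (θ • (u (N t + 1) - v))
    rw [norm_smul, norm_smul, Real.norm_of_nonneg (by linarith),
      Real.norm_of_nonneg hθ0] at hb
    nlinarith [norm_nonneg (u (N t) - v), norm_nonneg (u (N t + 1) - v),
      mul_nonneg (by linarith : (0:ℝ) ≤ 1-θ) (by linarith : 0 ≤ ε/2 - ‖u (N t) - v‖),
      mul_nonneg hθ0 (by linarith : 0 ≤ ε/2 - ‖u (N t + 1) - v‖)]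
  -- the combined trajectory
  set γ : ℝ → E3 := fun t => t • w t with hγ
  have hγcont : ContinuousOn γ (Ici (a 0)) := continuousOn_id.smul hwcont
  have hS : HasAsympVel (semitraj (a 0) γ) v := by
    refine ⟨a 0, γ, hγcont, rfl, ?_⟩
    refine Tendsto.congr' ?_ hwv
    filter_upwards [eventually_ge_atTop (1:ℝ)] with t ht
    rw [hγ]
    dsimp only
    rw [smul_smul, inv_mul_cancel₀ (by linarith), one_smul]
  obtain ⟨c', δ', hδ'c, himg', hlim'⟩ := hF v _ hS
  have hgv : Tendsto (fun t => ((f (t, γ t)).1)⁻¹ • (f (t, γ t)).2) atTop (𝓝 (F v)) :=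
    tendsto_ratio' f hf himg' hlim'
  -- conclude
  have hγa : ∀ n, γ (a n) = (a n) • u n := by
    intro n; rw [hγ]; dsimp only; rw [hwa n]
  rw [tendsto_iff_dist_tendsto_zero]
  have hbound : ∀ n : ℕ, dist ((F ∘ u) n) (F v) ≤
      1/((n:ℝ)+1) + dist (((f (a n, γ (a n))).1)⁻¹ • (f (a n, γ (a n))).2) (F v) := by
    intro n
    have h1 := hT n (a n) (haT n)
    rw [← hγa n] at h1
    calc dist ((F ∘ u) n) (F v)
        ≤ dist (F (u n)) (((f (a n, γ (a n))).1)⁻¹ • (f (a n, γ (a n))).2)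
          + dist (((f (a n, γ (a n))).1)⁻¹ • (f (a n, γ (a n))).2) (F v) :=
          dist_triangle _ _ _
      _ ≤ 1/((n:ℝ)+1) + dist (((f (a n, γ (a n))).1)⁻¹ • (f (a n, γ (a n))).2) (F v) := by
          rw [dist_comm] at h1; linarith
  refine squeeze_zero (fun n => dist_nonneg) hbound ?_
  have h2 : Tendsto
      (fun n : ℕ => dist (((f (a n, γ (a n))).1)⁻¹ • (f (a n, γ (a n))).2) (F v))
      atTop (𝓝 0) := tendsto_iff_dist_tendsto_zero.mp (hgv.comp hatop)
  simpa using tendsto_one_div_add_atTop_nhds_zero_nat.add h2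
end
end

section
/- Every asymptotically Euclidean transformation f of G = ℝ × ℝ³ can be factorized uniquely as f = f₁ ∘ f₂ ∘ f₃, where f₃ is a rotation (f₃(t,x) = (t, R x) for an orthogonal matrix R), f₂ is an asymptotically identical transformation, and f₁ is a boost (f₁(t,x) = (t, x − v₀ t) for some v₀ ∈ ℝ³). -/
open Filter Topology Set

noncomputable section

/-- The rotation `(t, x) ↦ (t, R x)` as a homeomorphism of `G`. -/
def rotHomeo (R : E3 ≃ₗᵢ[ℝ] E3) : Gal ≃ₜ Gal :=
  (Homeomorph.refl ℝ).prodCongr R.toHomeomorph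

/-- The boost `(t, x) ↦ (t, x − v₀ t)` as a homeomorphism of `G`. -/
def boostHomeo (v₀ : E3) : Gal ≃ₜ Gal where
  toFun p := (p.1, p.2 - p.1 • v₀)
  invFun p := (p.1, p.2 + p.1 • v₀)
  left_inv p := by simp
  right_inv p := by simp
  continuous_toFun := by fun_prop
  continuous_invFun := by fun_prop

/-! ### Auxiliary lemmas -/

lemma image_semitraj (f : Gal ≃ₜ Gal) (t₀ : ℝ) (γ : ℝ → E3) :
    f '' semitraj t₀ γ = (fun t => f (t, γ t)) '' Set.Ici t₀ := by
  rw [semitraj, Set.image_image]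

lemma asympVel_unique {S : Set Gal} {v w : E3}
    (hv : HasAsympVel S v) (hw : HasAsympVel S w) : v = w := by
  obtain ⟨t₀, γ, -, hS, hlim⟩ := hv
  obtain ⟨t₁, γ', -, hS', hlim'⟩ := hw
  have hE : (fun t : ℝ => t⁻¹ • γ t) =ᶠ[atTop] (fun t : ℝ => t⁻¹ • γ' t) := by
    filter_upwards [eventually_ge_atTop (max t₀ t₁)] with t ht
    have hmem : (t, γ t) ∈ semitraj t₁ γ' := by
      rw [← hS', hS]
      exact ⟨t, le_trans (le_max_left _ _) ht, rfl⟩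
    obtain ⟨s, -, hs⟩ := hmem
    have h1 : s = t := congrArg Prod.fst hs
    have h2 : γ' t = γ t := by
      have := congrArg Prod.snd hs
      simpa [h1] using this
    rw [h2]
  exact tendsto_nhds_unique (hlim.congr' hE) hlim'

lemma line_asympVel (v : E3) : HasAsympVel (semitraj 0 (fun t => t • v)) v := by
  refine ⟨0, fun t => t • v, (continuous_id.smul continuous_const).continuousOn, rfl, ?_⟩
  have hE : (fun t : ℝ => v) =ᶠ[atTop] (fun t : ℝ => t⁻¹ • t • v) := by
    filter_upwards [eventually_ne_atTop (0 : ℝ)] with t ht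
    rw [smul_smul, inv_mul_cancel₀ ht, one_smul]
  exact tendsto_const_nhds.congr' hE

lemma isAsympTransform_unique {f : Gal ≃ₜ Gal} {F F' : E3 → E3}
    (h : IsAsympTransform f F) (h' : IsAsympTransform f F') : F = F' := by
  funext v
  exact asympVel_unique (h v _ (line_asympVel v)) (h' v _ (line_asympVel v))

lemma isAsympTransform_trans {f g : Gal ≃ₜ Gal} {F G : E3 → E3}
    (hf : IsAsympTransform f F) (hg : IsAsympTransform g G) :
    IsAsympTransform (f.trans g) (G ∘ F) := by
  intro v S hS
  have := hg (F v) (f '' S) (hf v S hS)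
  rw [Set.image_image] at this; exact this

lemma rot_transform (R : E3 ≃ₗᵢ[ℝ] E3) :
    IsAsympTransform (rotHomeo R) (fun v => R v) := by
  intro v S hS
  obtain ⟨t₀, γ, hc, hS, hlim⟩ := hS
  refine ⟨t₀, fun t => R (γ t), R.continuous.comp_continuousOn hc, ?_, ?_⟩
  · rw [hS, image_semitraj]
    rfl
  · have : (fun t : ℝ => t⁻¹ • R (γ t)) = (fun x => R x) ∘ (fun t : ℝ => t⁻¹ • γ t) := by
      funext t; simp [Function.comp, map_smul]
    rw [this]
    exact (R.continuous.tendsto v).comp hlim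

lemma boost_transform (v₀ : E3) :
    IsAsympTransform (boostHomeo v₀) (fun v => v - v₀) := by
  intro v S hS
  obtain ⟨t₀, γ, hc, hS, hlim⟩ := hS
  refine ⟨t₀, fun t => γ t - t • v₀, hc.sub (by fun_prop), ?_, ?_⟩
  · rw [hS, image_semitraj]
    rfl
  · have hE : (fun t : ℝ => t⁻¹ • γ t - v₀) =ᶠ[atTop]
        (fun t : ℝ => t⁻¹ • (γ t - t • v₀)) := by
      filter_upwards [eventually_ne_atTop (0 : ℝ)] with t ht
      rw [smul_sub, smul_smul, inv_mul_cancel₀ ht, one_smul]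
    exact (hlim.sub_const v₀).congr' hE

lemma rot_symm (R : E3 ≃ₗᵢ[ℝ] E3) : (rotHomeo R).symm = rotHomeo R.symm := rfl

lemma boost_symm (v₀ : E3) : (boostHomeo v₀).symm = boostHomeo (-v₀) := by
  refine Homeomorph.ext fun p => ?_
  show (p.1, p.2 + p.1 • v₀) = (p.1, p.2 - p.1 • (-v₀))
  simp [sub_neg_eq_add]

lemma causal_trans {f g : Gal ≃ₜ Gal} (hf : Causal f) (hg : Causal g) :
    Causal (f.trans g) := fun u w h => hg _ _ (hf u w h)

lemma causal_rot (R : E3 ≃ₗᵢ[ℝ] E3) : Causal (rotHomeo R) := fun _ _ h => h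

lemma causal_boost (v₀ : E3) : Causal (boostHomeo v₀) := fun _ _ h => h

/-- Every asymptotically Euclidean transformation `f` of `G = ℝ × ℝ³`
can be factorized uniquely as `f = f₁ ∘ f₂ ∘ f₃` where `f₃` is a rotation
(`f₃(t,x) = (t, R x)` for an orthogonal `R`), `f₂` is an asymptotically identical
transformation, and `f₁` is a boost (`f₁(t,x) = (t, x − v₀ t)`). -/
theorem stmt15 (f : Gal ≃ₜ Gal) (hf : AsympEuclidean f) :
    ∃! triple : (E3 ≃ₗᵢ[ℝ] E3) × E3 × (Gal ≃ₜ Gal),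
      AsympIdentical triple.2.2 ∧
        f = ((rotHomeo triple.1).trans triple.2.2).trans (boostHomeo triple.2.1) := by
  obtain ⟨hC, ⟨⟨F, hF0⟩, ⟨F', hF'⟩⟩, R, v₀, hF⟩ := hf
  clear hF0
  set f₂ : Gal ≃ₜ Gal := ((rotHomeo R).symm.trans f).trans (boostHomeo v₀).symm with hf₂
  -- asymptotic transform of f₂ is the identity
  have hT : IsAsympTransform f₂ (id : E3 → E3) := by
    have h1 : IsAsympTransform (rotHomeo R).symm (fun v => R.symm v) := by
      rw [rot_symm]; exact rot_transform R.symm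
    have h2 := isAsympTransform_trans h1 hF
    have h3 : IsAsympTransform (boostHomeo v₀).symm (fun v => v - (-v₀)) := by
      rw [boost_symm]; exact boost_transform (-v₀)
    have h4 := isAsympTransform_trans h2 h3
    have : ((fun v => v - (-v₀)) ∘ (fun v => R v - v₀) ∘ fun v => R.symm v) =
        (id : E3 → E3) := by
      funext v; simp
    rwa [this] at h4
  have hCausal₂ : Causal f₂ := by
    intro u w h
    have h1 : ((rotHomeo R).symm u).1 < ((rotHomeo R).symm w).1 := h
    exact hC _ _ h1
  have hReg₂ : AsympReg f₂ := ⟨id, hT⟩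
  have hsymm₂ : f₂.symm = (boostHomeo v₀).trans (f.symm.trans (rotHomeo R)) := by
    refine Homeomorph.ext fun p => rfl
  have hReg₂' : AsympReg f₂.symm := by
    rw [hsymm₂]
    exact ⟨_, isAsympTransform_trans (boost_transform v₀)
      (isAsympTransform_trans hF' (rot_transform R))⟩
  have hfactor : f = ((rotHomeo R).trans f₂).trans (boostHomeo v₀) := by
    refine Homeomorph.ext fun p => ?_
    simp [f₂]
  refine ⟨(R, v₀, f₂), ⟨⟨hCausal₂, ⟨hReg₂, hReg₂'⟩, hT⟩, hfactor⟩, ?_⟩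
  rintro ⟨R', v₀', g⟩ ⟨⟨hgC, hgH, hgT⟩, heq⟩
  -- the asymptotic transform of the composition is v ↦ R' v - v₀'
  have hF2 : IsAsympTransform f (fun v => R' v - v₀') := by
    rw [heq]
    have := isAsympTransform_trans (isAsympTransform_trans (rot_transform R') hgT)
      (boost_transform v₀')
    convert this using 1
    rfl
  have hFF : (fun v => R v - v₀) = (fun v => R' v - v₀') :=
    isAsympTransform_unique hF hF2
  have hv0 : v₀' = v₀ := by
    have := congrFun hFF 0
    simpa using this.symm
  have hR : R' = R := by
    refine LinearIsometryEquiv.ext fun v => ?_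
    have h := congrFun hFF v
    rw [hv0] at h
    exact (sub_left_inj.mp h).symm
  have hg : g = f₂ := by
    rw [hR] at heq
    rw [hv0] at heq
    refine Homeomorph.ext fun x => ?_
    have hx : f ((rotHomeo R).symm x) = boostHomeo v₀ (g x) := by
      conv_lhs => rw [heq]
      simp
    show g x = (boostHomeo v₀).symm (f ((rotHomeo R).symm x))
    rw [hx, Homeomorph.symm_apply_apply]
  simp only [Prod.mk.injEq]
  exact ⟨hR, hv0, hg⟩
end
end

section
/- Let Δ ⊆ ℝ³ be a bounded set and let f be an asymptotically identical transformation of G = ℝ × ℝ³. For v ∈ ℝ³ let vᶜ denote the semitrajectory {(s, v s) : s ≥ 0}, and let f(vᶜ)(t) denote the spatial point at time t of the image semitrajectory f(vᶜ) (so that, writing f(t,x) = (f_T(t), f_X(t,x)), one has f(vᶜ)(f_T(s)) = f_X(s, v s)). Then sup_{v ∈ Δ} ‖f(vᶜ)(t) − v t‖ / t → 0 as t → +∞. -/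
open Filter Topology Set

noncomputable section

/-! ### Auxiliary material -/

section InterpAux

variable {E : Type*} [NormedAddCommGroup E] [NormedSpace ℝ E]

/-- Piecewise-linear interpolation of a `ℤ`-indexed family of points. -/
def interpZ (c : ℤ → E) (y : ℝ) : E := c ⌊y⌋ + Int.fract y • (c (⌊y⌋ + 1) - c ⌊y⌋)

lemma interpZ_intCast (c : ℤ → E) (n : ℤ) : interpZ c (n : ℝ) = c n := by
  simp [interpZ]

lemma interpZ_eq_of_mem (c : ℤ → E) {n : ℤ} {y : ℝ} (h1 : (n : ℝ) ≤ y) (h2 : y < n + 1) :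
    interpZ c y = c n + (y - n) • (c (n + 1) - c n) := by
  have hfl : ⌊y⌋ = n := Int.floor_eq_iff.mpr ⟨h1, by exact_mod_cast h2⟩
  rw [interpZ, hfl, ← Int.self_sub_floor, hfl]

lemma continuous_interpZ (c : ℤ → E) : Continuous (interpZ c) := by
  rw [continuous_iff_continuousAt]
  intro y
  have haff : ∀ m : ℤ, Continuous (fun x : ℝ => c m + (x - m) • (c (m + 1) - c m)) := by
    intro m; fun_prop
  by_cases hy : (⌊y⌋ : ℝ) = y
  · set m := ⌊y⌋ with hm
    rw [← hy]
    rw [← continuousWithinAt_univ, ← Iic_union_Ici (a := (m : ℝ))]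
    apply ContinuousWithinAt.union
    · have hmem : Icc ((m : ℝ) - 1) (m : ℝ) ∈ 𝓝[≤] (m : ℝ) :=
        Icc_mem_nhdsLE_of_mem ⟨by linarith, le_refl _⟩
      have hsub : m - 1 + 1 = m := by ring
      have heq : ∀ x ∈ Icc ((m : ℝ) - 1) (m : ℝ),
          interpZ c x = c (m - 1) + (x - ((m : ℝ) - 1)) • (c m - c (m - 1)) := by
        intro x hx
        obtain ⟨hx1, hx2⟩ := hx
        rcases eq_or_lt_of_le hx2 with h | h
        · rw [h, interpZ_intCast]
          have h1 : ((m : ℝ) - ((m : ℝ) - 1)) = 1 := by ring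
          rw [h1, one_smul]; abel
        · have h2 := interpZ_eq_of_mem c (n := m - 1) (y := x) (by push_cast; linarith)
            (by push_cast; linarith)
          rw [h2, hsub]; push_cast; ring_nf
      have hg : ContinuousWithinAt
          (fun x : ℝ => c (m - 1) + (x - ((m : ℝ) - 1)) • (c m - c (m - 1)))
          (Iic (m : ℝ)) (m : ℝ) := by
        have : Continuous (fun x : ℝ => c (m - 1) + (x - ((m : ℝ) - 1)) • (c m - c (m - 1))) := by
          fun_prop
        exact this.continuousAt.continuousWithinAt
      refine hg.congr_of_eventuallyEq ?_ ?_
      · exact Filter.eventually_of_mem hmem heq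
      · rw [interpZ_intCast]
        have h1 : ((m : ℝ) - ((m : ℝ) - 1)) = 1 := by ring
        rw [h1, one_smul]; abel
    · have hmem : Ico (m : ℝ) ((m : ℝ) + 1) ∈ 𝓝[≥] (m : ℝ) :=
        Ico_mem_nhdsGE_of_mem ⟨le_refl _, by linarith⟩
      have heq : ∀ x ∈ Ico (m : ℝ) ((m : ℝ) + 1),
          interpZ c x = c m + (x - (m : ℝ)) • (c (m + 1) - c m) := by
        intro x hx
        exact interpZ_eq_of_mem c hx.1 (by exact_mod_cast hx.2)
      have hg : ContinuousWithinAt (fun x : ℝ => c m + (x - (m : ℝ)) • (c (m + 1) - c m))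
          (Ici (m : ℝ)) (m : ℝ) := ((haff m).continuousAt).continuousWithinAt
      refine hg.congr_of_eventuallyEq ?_ ?_
      · exact Filter.eventually_of_mem hmem heq
      · rw [interpZ_intCast]; simp
  · have h1 : (⌊y⌋ : ℝ) < y := lt_of_le_of_ne (Int.floor_le y) hy
    have h2 : y < ⌊y⌋ + 1 := Int.lt_floor_add_one y
    have hmem : Ioo ((⌊y⌋ : ℝ)) ((⌊y⌋ : ℝ) + 1) ∈ 𝓝 y := Ioo_mem_nhds h1 h2
    refine ((haff ⌊y⌋).continuousAt).congr ?_
    refine Filter.eventuallyEq_of_mem hmem (fun x hx => ?_)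
    exact (interpZ_eq_of_mem c hx.1.le (by exact_mod_cast hx.2)).symm

lemma interpZ_mem_Ico {c : ℤ → ℝ} (hc : StrictMono c) (y : ℝ) :
    interpZ c y ∈ Ico (c ⌊y⌋) (c (⌊y⌋ + 1)) := by
  have hd : 0 < c (⌊y⌋ + 1) - c ⌊y⌋ := sub_pos.mpr (hc (lt_add_one _))
  have hf0 : 0 ≤ Int.fract y := Int.fract_nonneg y
  have hf1 : Int.fract y < 1 := Int.fract_lt_one y
  rw [interpZ, smul_eq_mul]
  constructor <;> nlinarith

lemma strictMono_interpZ {c : ℤ → ℝ} (hc : StrictMono c) : StrictMono (interpZ c) := by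
  intro a b hab
  rcases eq_or_lt_of_le (Int.floor_le_floor hab.le) with h | h
  · have hd : 0 < c (⌊a⌋ + 1) - c ⌊a⌋ := sub_pos.mpr (hc (lt_add_one _))
    have : Int.fract a < Int.fract b := by
      rw [← Int.self_sub_floor, ← Int.self_sub_floor, ← h]; linarith
    rw [interpZ, interpZ, ← h, smul_eq_mul, smul_eq_mul]
    nlinarith
  · calc interpZ c a < c (⌊a⌋ + 1) := (interpZ_mem_Ico hc a).2
      _ ≤ c ⌊b⌋ := hc.monotone h
      _ ≤ interpZ c b := (interpZ_mem_Ico hc b).1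

lemma core_ineq (a b θ ε : ℝ) (w₁ w₂ vv : E)
    (ha : 0 < a) (hb : a < b) (hθ0 : 0 ≤ θ) (hθ1 : θ < 1)
    (h1 : ‖w₁ - vv‖ ≤ ε) (h2 : ‖w₂ - vv‖ ≤ ε) :
    ‖(a + θ * (b - a))⁻¹ • (a • w₁ + θ • (b • w₂ - a • w₁)) - vv‖ ≤ ε := by
  set x : ℝ := a + θ * (b - a) with hxdef
  have hx : 0 < x := by nlinarith
  have key : a • w₁ + θ • (b • w₂ - a • w₁) - x • vv
      = ((1 - θ) * a) • (w₁ - vv) + (θ * b) • (w₂ - vv) := by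
    rw [hxdef]; module
  have h0 : vv = x⁻¹ • (x • vv) := by rw [smul_smul, inv_mul_cancel₀ hx.ne', one_smul]
  have hsplit : x⁻¹ • (a • w₁ + θ • (b • w₂ - a • w₁)) - vv
      = x⁻¹ • (((1 - θ) * a) • (w₁ - vv) + (θ * b) • (w₂ - vv)) := by
    calc x⁻¹ • (a • w₁ + θ • (b • w₂ - a • w₁)) - vv
        = x⁻¹ • (a • w₁ + θ • (b • w₂ - a • w₁)) - x⁻¹ • (x • vv) := by rw [← h0]
      _ = x⁻¹ • (a • w₁ + θ • (b • w₂ - a • w₁) - x • vv) := (smul_sub _ _ _).symm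
      _ = _ := by rw [key]
  rw [hsplit]
  have hc1 : (0:ℝ) ≤ (1 - θ) * a := by nlinarith
  have hc2 : (0:ℝ) ≤ θ * b := by nlinarith
  have hbound : ‖((1 - θ) * a) • (w₁ - vv) + (θ * b) • (w₂ - vv)‖
      ≤ ((1 - θ) * a) * ε + (θ * b) * ε := by
    refine (norm_add_le _ _).trans ?_
    rw [norm_smul, norm_smul, Real.norm_eq_abs, Real.norm_eq_abs,
      abs_of_nonneg hc1, abs_of_nonneg hc2]
    exact add_le_add (mul_le_mul_of_nonneg_left h1 hc1) (mul_le_mul_of_nonneg_left h2 hc2)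
  calc ‖x⁻¹ • (((1 - θ) * a) • (w₁ - vv) + (θ * b) • (w₂ - vv))‖
      = x⁻¹ * ‖((1 - θ) * a) • (w₁ - vv) + (θ * b) • (w₂ - vv)‖ := by
        rw [norm_smul, Real.norm_eq_abs, abs_of_pos (inv_pos.mpr hx)]
    _ ≤ x⁻¹ * (((1 - θ) * a) * ε + (θ * b) * ε) :=
        mul_le_mul_of_nonneg_left hbound (inv_pos.mpr hx).le
    _ = x⁻¹ * (x * ε) := by rw [hxdef]; ring_nf
    _ = ε := by rw [← mul_assoc, inv_mul_cancel₀ hx.ne', one_mul]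

lemma exists_seq_of_forall {P : ℝ → Prop} (h : ∀ N : ℝ, ∃ t ≥ N, P t) :
    ∃ u : ℕ → ℝ, StrictMono u ∧ (∀ n, P (u n)) ∧ ∀ n : ℕ, (n : ℝ) ≤ u n := by
  choose g hg1 hg2 using h
  let u : ℕ → ℝ := fun n => Nat.rec (g 0) (fun k prev => g (max (prev + 1) ((k : ℝ) + 1))) n
  have hsucc : ∀ n : ℕ, u (n + 1) = g (max (u n + 1) ((n : ℝ) + 1)) := fun n => rfl
  have hlt : ∀ n : ℕ, u n < u (n + 1) := by
    intro n; rw [hsucc]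
    calc u n < u n + 1 := lt_add_one _
      _ ≤ max (u n + 1) ((n : ℝ) + 1) := le_max_left _ _
      _ ≤ _ := hg1 _
  have hge : ∀ n : ℕ, (n : ℝ) ≤ u n := by
    intro n
    cases n with
    | zero => rw [Nat.cast_zero]; exact hg1 0
    | succ k =>
        rw [hsucc]
        calc ((k + 1 : ℕ) : ℝ) = (k : ℝ) + 1 := by push_cast; ring
          _ ≤ max (u k + 1) ((k : ℝ) + 1) := le_max_right _ _
          _ ≤ _ := hg1 _
  have hP : ∀ n : ℕ, P (u n) := by
    intro n
    cases n with
    | zero => exact hg2 0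
    | succ k => rw [hsucc]; exact hg2 _
  exact ⟨u, strictMono_nat_of_lt_succ hlt, hP, hge⟩

end InterpAux

/-- Let `Δ ⊆ ℝ³` be a bounded set and let `f` be an asymptotically
identical transformation of `G = ℝ × ℝ³`, written `f(t,x) = (f_T(t), f_X(t,x))`.  For
`v ∈ ℝ³`, `vᶜ` is the semitrajectory `{(s, v s) : s ≥ 0}`, whose image satisfies
`f(vᶜ)(f_T(s)) = f_X(s, v s)`, i.e. the spatial point of `f(vᶜ)` at time `t` is
`f_X(f_T⁻¹(t), f_T⁻¹(t) • v)`.  Then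
`sup_{v ∈ Δ} ‖f(vᶜ)(t) − v t‖ / t → 0` as `t → +∞`. -/
theorem stmt18 (Δ : Set E3) (hΔ : Bornology.IsBounded Δ)
    (f : Gal ≃ₜ Gal) (hf : AsympIdentical f)
    (fT : ℝ ≃ₜ ℝ) (fX : ℝ → E3 → E3)
    (hdec : ∀ p : Gal, f p = (fT p.1, fX p.1 p.2)) :
    Tendsto
      (fun t : ℝ =>
        ⨆ v : Δ, ‖fX (fT.symm t) ((fT.symm t : ℝ) • (v : E3)) - t • (v : E3)‖ / t)
      atTop (𝓝 0) := by
  by_contra hcon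
  rw [Metric.tendsto_atTop] at hcon
  push_neg at hcon
  obtain ⟨ε, hε, hfreq⟩ := hcon
  -- `fT` is strictly increasing, and so is its inverse
  have hfTmono : StrictMono (fT : ℝ → ℝ) := by
    intro a b hab
    have h1 := hf.1 (a, 0) (b, 0) hab
    rw [hdec (a, 0), hdec (b, 0)] at h1
    exact h1
  have hfTsymm_mono : StrictMono (fT.symm : ℝ → ℝ) := by
    intro a b hab
    have h2 : fT (fT.symm a) < fT (fT.symm b) := by
      rw [fT.apply_symm_apply, fT.apply_symm_apply]; exact hab
    exact hfTmono.lt_iff_lt.mp h2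
  have hsymm_top : Tendsto (fT.symm : ℝ → ℝ) atTop atTop :=
    tendsto_atTop_atTop_of_monotone hfTsymm_mono.monotone
      (fun b => ⟨fT b, by rw [fT.symm_apply_apply]⟩)
  set M : ℝ := max (fT 1) 1 with hMdef
  have hM1 : (1:ℝ) ≤ M := le_max_right _ _
  -- the frequently-bad property
  have hP : ∀ N : ℝ, ∃ t ≥ N, M < t ∧ ∃ vv ∈ Δ,
      ε / 2 * t < ‖fX (fT.symm t) ((fT.symm t : ℝ) • vv) - t • vv‖ := by
    intro N
    obtain ⟨t, ht, hbad⟩ := hfreq (max N (M + 1))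
    have htM : M < t := lt_of_lt_of_le (by linarith) (le_trans (le_max_right _ _) ht)
    have htpos : (0:ℝ) < t := by linarith
    rw [dist_zero_right, Real.norm_eq_abs] at hbad
    by_cases hne : Nonempty Δ
    · by_cases hbdd : BddAbove (range fun v : Δ =>
        ‖fX (fT.symm t) ((fT.symm t : ℝ) • (v : E3)) - t • (v : E3)‖ / t)
      · have hnn : (0:ℝ) ≤ ⨆ v : Δ,
            ‖fX (fT.symm t) ((fT.symm t : ℝ) • (v : E3)) - t • (v : E3)‖ / t :=
          Real.iSup_nonneg fun v => div_nonneg (norm_nonneg _) htpos.le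
        rw [abs_of_nonneg hnn] at hbad
        have hlt : ε / 2 < ⨆ v : Δ,
            ‖fX (fT.symm t) ((fT.symm t : ℝ) • (v : E3)) - t • (v : E3)‖ / t :=
          lt_of_lt_of_le (by linarith) hbad
        obtain ⟨i, hi⟩ := exists_lt_of_lt_ciSup hlt
        rw [lt_div_iff₀ htpos] at hi
        exact ⟨t, le_trans (le_max_left _ _) ht, htM, i, i.2, by linarith [hi]⟩
      · rw [Real.iSup_of_not_bddAbove hbdd] at hbad
        simp at hbad; linarith
    · rw [not_nonempty_iff] at hne
      rw [Real.iSup_of_isEmpty] at hbad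
      simp at hbad; linarith
  obtain ⟨tb, htbmono, htbP, htbge⟩ := exists_seq_of_forall hP
  have htbM : ∀ n, M < tb n := fun n => (htbP n).1
  choose vseq hvΔ hvbad using fun n => (htbP n).2
  -- compactness: convergent subsequence of the bad velocities
  obtain ⟨vlim, -, φ, hφ, hconv⟩ :=
    (hΔ.isCompact_closure).tendsto_subseq (fun n => subset_closure (hvΔ n))
  -- the bad times and their preimages
  set τ : ℕ → ℝ := fun n => tb (φ n) with hτdef
  set s : ℕ → ℝ := fun n => fT.symm (τ n) with hsdef
  have hτM : ∀ n, M < τ n := fun n => htbM (φ n)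
  have hτpos : ∀ n, (0:ℝ) < τ n := fun n => lt_of_lt_of_le (by linarith [hM1]) (hτM n).le
  have hs_mono : StrictMono s := hfTsymm_mono.comp (htbmono.comp hφ)
  have hs_gt1 : ∀ n, (1:ℝ) < s n := by
    intro n
    have h1 : fT 1 < τ n := lt_of_le_of_lt (le_max_left _ _) (hτM n)
    have h2 := hfTsymm_mono h1
    rwa [fT.symm_apply_apply] at h2
  have hs_top : Tendsto s atTop atTop := by
    apply hsymm_top.comp
    apply tendsto_atTop_mono (fun n => (htbge n).trans (htbmono.monotone hφ.le_apply))
    exact tendsto_natCast_atTop_atTop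
  -- the interpolation data
  set sZ : ℤ → ℝ := fun z => if 0 ≤ z then s z.toNat else s 0 + (z : ℝ) with hsZdef
  set vZ : ℤ → E3 := fun z => vseq (φ z.toNat) with hvZdef
  set pZ : ℤ → E3 := fun z => sZ z • vZ z with hpZdef
  have hsZn : ∀ n : ℕ, sZ (n : ℤ) = s n := by
    intro n; simp [hsZdef, Int.toNat_natCast]
  have hsZ_mono : StrictMono sZ := by
    intro a b hab
    by_cases ha : 0 ≤ a
    · have hb : 0 ≤ b := le_trans ha hab.le
      simp only [hsZdef, if_pos ha, if_pos hb]
      exact hs_mono ((Int.toNat_lt_toNat (lt_of_le_of_lt ha hab)).mpr hab)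
    · have ha' : a < 0 := not_le.mp ha
      by_cases hb : 0 ≤ b
      · simp only [hsZdef, if_neg ha, if_pos hb]
        have h1 : (a : ℝ) < 0 := by exact_mod_cast ha'
        have h2 : s 0 ≤ s b.toNat := hs_mono.monotone (Nat.zero_le _)
        linarith
      · simp only [hsZdef, if_neg ha, if_neg hb]
        have : (a : ℝ) < b := by exact_mod_cast hab
        linarith
  have hsZ_pos : ∀ z : ℤ, 0 ≤ z → (0:ℝ) < sZ z := by
    intro z hz
    simp only [hsZdef, if_pos hz]
    linarith [hs_gt1 z.toNat]
  -- the time-change homeomorphism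
  have hS_mono : StrictMono (interpZ sZ) := strictMono_interpZ hsZ_mono
  have hS_surj : Function.Surjective (interpZ sZ) := by
    apply (continuous_interpZ sZ).surjective
    · apply tendsto_atTop_atTop_of_monotone hS_mono.monotone
      intro b
      obtain ⟨n, hn⟩ := (hs_top.eventually (eventually_ge_atTop b)).exists
      exact ⟨((n : ℤ) : ℝ), by rw [interpZ_intCast, hsZn]; exact hn⟩
    · apply tendsto_atBot_atBot_of_monotone hS_mono.monotone
      intro b
      set z : ℤ := min ⌊b - s 0⌋ (-1) with hzdef
      have hz0 : ¬ (0 ≤ z) := by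
        simp only [hzdef]
        intro hcon2
        have := le_trans hcon2 (min_le_right _ _)
        norm_num at this
      refine ⟨((z : ℤ) : ℝ), ?_⟩
      rw [interpZ_intCast]
      simp only [hsZdef, if_neg hz0]
      have h1 : (z : ℝ) ≤ b - s 0 := by
        calc (z : ℝ) ≤ (⌊b - s 0⌋ : ℝ) := by exact_mod_cast min_le_left _ _
          _ ≤ b - s 0 := Int.floor_le _
      linarith
  set e : ℝ ≃o ℝ := StrictMono.orderIsoOfSurjective _ hS_mono hS_surj with hedef
  have he_apply : ∀ y : ℝ, e y = interpZ sZ y := fun y => rfl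
  set γ : ℝ → E3 := fun x => interpZ pZ (e.symm x) with hγdef
  have hγcont : Continuous γ := (continuous_interpZ pZ).comp e.symm.continuous
  have he_symm_nat : ∀ n : ℕ, e.symm (s n) = ((n : ℤ) : ℝ) := by
    intro n
    have h1 : e ((n : ℤ) : ℝ) = s n := by rw [he_apply, interpZ_intCast, hsZn]
    rw [← h1, e.symm_apply_apply]
  have hγs : ∀ n : ℕ, γ (s n) = s n • vseq (φ n) := by
    intro n
    rw [hγdef]
    simp only
    rw [he_symm_nat n, interpZ_intCast]
    simp [hpZdef, hvZdef, hsZn, Int.toNat_natCast]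
  -- asymptotic velocity of γ
  have hvel : Tendsto (fun x : ℝ => x⁻¹ • γ x) atTop (𝓝 vlim) := by
    rw [Metric.tendsto_atTop]
    intro ε' hε'
    obtain ⟨N, hN⟩ := Metric.tendsto_atTop.mp hconv (ε' / 2) (by linarith)
    refine ⟨s N, fun x hx => ?_⟩
    set y : ℝ := e.symm x with hydef
    have hxy : interpZ sZ y = x := e.apply_symm_apply x
    have hyN : ((N : ℤ) : ℝ) ≤ y := by
      rw [← he_symm_nat N]
      exact e.symm.monotone hx
    set n : ℤ := ⌊y⌋ with hndef
    have hnN : (N : ℤ) ≤ n := Int.le_floor.mpr hyN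
    have hn0 : (0:ℤ) ≤ n := le_trans (Int.natCast_nonneg N) hnN
    have hn10 : (0:ℤ) ≤ n + 1 := by linarith
    have hw1 : ‖vZ n - vlim‖ ≤ ε' / 2 := by
      have htn : N ≤ n.toNat := (Int.le_toNat hn0).mpr hnN
      have := hN n.toNat htn
      rw [Function.comp_apply, dist_eq_norm] at this
      simp only [hvZdef]
      exact this.le
    have hw2 : ‖vZ (n + 1) - vlim‖ ≤ ε' / 2 := by
      have htn : N ≤ (n + 1).toNat := (Int.le_toNat hn10).mpr (by linarith)
      have := hN (n + 1).toNat htn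
      rw [Function.comp_apply, dist_eq_norm] at this
      simp only [hvZdef]
      exact this.le
    have ha : (0:ℝ) < sZ n := hsZ_pos n hn0
    have hb : sZ n < sZ (n + 1) := hsZ_mono (lt_add_one n)
    have hcore := core_ineq (sZ n) (sZ (n + 1)) (Int.fract y) (ε' / 2) (vZ n) (vZ (n + 1)) vlim
      ha hb (Int.fract_nonneg y) (Int.fract_lt_one y) hw1 hw2
    have hx_eq : x = sZ n + Int.fract y * (sZ (n + 1) - sZ n) := by
      rw [← hxy, interpZ, ← hndef, smul_eq_mul]
    have hγx : γ x = sZ n • vZ n + Int.fract y • (sZ (n + 1) • vZ (n + 1) - sZ n • vZ n) := by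
      rw [hγdef]
      simp only
      rw [← hydef, interpZ, ← hndef]
    rw [dist_eq_norm, hγx, hx_eq]
    exact lt_of_le_of_lt hcore (by linarith)
  -- apply the asymptotic-identity hypothesis
  have hAsymp : HasAsympVel (semitraj 0 γ) vlim :=
    ⟨0, γ, hγcont.continuousOn, rfl, hvel⟩
  obtain ⟨t₀', δ, hδc, himg, hδlim⟩ := hf.2.2 vlim _ hAsymp
  have hδval : ∀ x : ℝ, 0 ≤ x → δ (fT x) = fX x (γ x) := by
    intro x hx
    have hmem : f (x, γ x) ∈ semitraj t₀' δ := by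
      rw [← himg]
      exact ⟨(x, γ x), ⟨x, hx, rfl⟩, rfl⟩
    obtain ⟨u, hu, huv⟩ := hmem
    rw [hdec (x, γ x)] at huv
    rw [Prod.ext_iff] at huv
    obtain ⟨h1, h2⟩ := huv
    simp only at h1 h2
    rw [← h1]
    exact h2
  have hτs : ∀ n, fT (s n) = τ n := fun n => fT.apply_symm_apply _
  have hkey : ∀ n, δ (τ n) = fX (s n) (s n • vseq (φ n)) := by
    intro n
    have h0 : (0:ℝ) ≤ s n := by linarith [hs_gt1 n]
    have h3 := hδval (s n) h0
    rw [hγs n, hτs n] at h3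
    exact h3
  have hτtop : Tendsto τ atTop atTop := by
    apply tendsto_atTop_mono (fun n => (htbge n).trans (htbmono.monotone hφ.le_apply))
    exact tendsto_natCast_atTop_atTop
  have hlim2 : Tendsto (fun k => (τ k)⁻¹ • δ (τ k)) atTop (𝓝 vlim) := hδlim.comp hτtop
  have hlim3 : Tendsto (fun k => ‖(τ k)⁻¹ • δ (τ k) - vseq (φ k)‖) atTop (𝓝 0) := by
    have h4 := (hlim2.sub hconv).norm
    simpa using h4
  have hdist : ∀ n, ε / 2 < ‖(τ n)⁻¹ • δ (τ n) - vseq (φ n)‖ := by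
    intro n
    have hb : ε / 2 * τ n < ‖δ (τ n) - τ n • vseq (φ n)‖ := by
      rw [hkey n]; exact hvbad (φ n)
    have heq2 : (τ n)⁻¹ • δ (τ n) - vseq (φ n) = (τ n)⁻¹ • (δ (τ n) - τ n • vseq (φ n)) := by
      rw [smul_sub, smul_smul, inv_mul_cancel₀ (hτpos n).ne', one_smul]
    rw [heq2, norm_smul, Real.norm_eq_abs, abs_of_pos (inv_pos.mpr (hτpos n)),
      inv_mul_eq_div, lt_div_iff₀ (hτpos n)]
    exact hb
  obtain ⟨n, hn⟩ := (hlim3.eventually_lt_const (by linarith : (0:ℝ) < ε / 2)).exists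
  exact absurd (hdist n) (not_lt.mpr hn.le)
end
end
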